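/- Let R_1,…,R_m,R_{m+1} be exchangeable real-valued random variables and let 1 ≤ k ≤ m. Then the probability that R_{m+1} is at most the k-th smallest value of R_1,…,R_m is at least k/(m+1). -/

import Mathlib

open MeasureTheory
open scoped ENNReal

noncomputable section

open Classical in
/-- The `k`-th smallest of the values `R i`, `i ∈ s` (the `k`-th order statistic);
junk value if `k = 0` or `k > s.card`. -/
def kthSmallestReal {ι : Type*} (s : Finset ι) (R : ι → ℝ) (k : ℕ) : ℝ :=
  sInf {t : ℝ | k ≤ (s.filter fun i => R i ≤ t).card}

section aux
variable {ι : Type*} [DecidableEq ι] (s : Finset ι) (R : ι → ℝ) (k : ℕ)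

lemma kth_set_nonempty (hk1 : 1 ≤ k) (hks : k ≤ s.card) :
    {t : ℝ | k ≤ (s.filter fun i => R i ≤ t).card}.Nonempty := by
  have hs : s.Nonempty := Finset.card_pos.mp (lt_of_lt_of_le hk1 hks)
  have him : (s.image R).Nonempty := hs.image R
  refine ⟨(s.image R).max' him, ?_⟩
  have : s.filter (fun i => R i ≤ (s.image R).max' him) = s := by
    apply Finset.filter_true_of_mem
    intro i hi
    exact Finset.le_max' _ _ (Finset.mem_image_of_mem R hi)
  simp only [Set.mem_setOf_eq, this]
  exact hks

lemma kth_set_bddBelow (hk1 : 1 ≤ k) (hks : k ≤ s.card) :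
    BddBelow {t : ℝ | k ≤ (s.filter fun i => R i ≤ t).card} := by
  have hs : s.Nonempty := Finset.card_pos.mp (lt_of_lt_of_le hk1 hks)
  have him : (s.image R).Nonempty := hs.image R
  refine ⟨(s.image R).min' him, ?_⟩
  intro t ht
  by_contra hlt
  push_neg at hlt
  have : s.filter (fun i => R i ≤ t) = ∅ := by
    apply Finset.filter_false_of_mem
    intro i hi
    have := Finset.min'_le (s.image R) (R i) (Finset.mem_image_of_mem R hi)
    linarith
  simp only [Set.mem_setOf_eq, this, Finset.card_empty] at ht
  omega

lemma le_kth_iff (hk1 : 1 ≤ k) (hks : k ≤ s.card) (v : ℝ) :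
    v ≤ kthSmallestReal s R k ↔ (s.filter fun i => R i < v).card < k := by
  constructor
  · intro h
    by_contra hc
    push_neg at hc
    set A := s.filter (fun i => R i < v) with hA
    have hAne : A.Nonempty := Finset.card_pos.mp (lt_of_lt_of_le hk1 hc)
    have himA : (A.image R).Nonempty := hAne.image R
    set t := (A.image R).max' himA with ht
    have htv : t < v := by
      obtain ⟨i0, hi0, hRi0⟩ := Finset.mem_image.mp ((A.image R).max'_mem himA)
      have : R i0 < v := (Finset.mem_filter.mp hi0).2
      rw [ht, ← hRi0]; exact this
    have htS : t ∈ {t : ℝ | k ≤ (s.filter fun i => R i ≤ t).card} := by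
      have hsub : A ⊆ s.filter (fun i => R i ≤ t) := by
        intro i hi
        rw [Finset.mem_filter]
        refine ⟨(Finset.mem_filter.mp hi).1, ?_⟩
        exact Finset.le_max' _ _ (Finset.mem_image_of_mem R hi)
      exact le_trans hc (Finset.card_le_card hsub)
    have := csInf_le (kth_set_bddBelow s R k hk1 hks) htS
    have : kthSmallestReal s R k ≤ t := this
    linarith
  · intro h
    apply le_csInf (kth_set_nonempty s R k hk1 hks)
    intro t ht
    by_contra hlt
    push_neg at hlt
    have hsub : s.filter (fun i => R i ≤ t) ⊆ s.filter (fun i => R i < v) := by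
      intro i hi
      rw [Finset.mem_filter] at *
      exact ⟨hi.1, lt_of_le_of_lt hi.2 hlt⟩
    have := Finset.card_le_card hsub
    simp only [Set.mem_setOf_eq] at ht
    omega
end aux

lemma kth_mem {ι : Type*} (s : Finset ι) (R : ι → ℝ) (k : ℕ) (hk1 : 1 ≤ k) (hks : k ≤ s.card) :
    k ≤ (s.filter fun i => R i ≤ kthSmallestReal s R k).card := by
  classical
  set Q := kthSmallestReal s R k with hQ
  by_contra hc
  push_neg at hc
  set B := s.filter (fun i => Q < R i) with hB
  have hBne : B.Nonempty := by
    rw [Finset.nonempty_iff_ne_empty]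
    intro hemp
    have : s.filter (fun i => R i ≤ Q) = s := by
      apply Finset.filter_true_of_mem
      intro i hi
      by_contra hgt
      push_neg at hgt
      have : i ∈ B := Finset.mem_filter.mpr ⟨hi, hgt⟩
      simp [hemp] at this
    rw [this] at hc
    omega
  have himB : (B.image R).Nonempty := hBne.image R
  set u := (B.image R).min' himB with hu
  have hQu : Q < u := by
    obtain ⟨i0, hi0, hRi0⟩ := Finset.mem_image.mp ((B.image R).min'_mem himB)
    have : Q < R i0 := (Finset.mem_filter.mp hi0).2
    rw [hu, ← hRi0]; exact this
  have hQlt : sInf {t : ℝ | k ≤ (s.filter fun i => R i ≤ t).card} < u := hQu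
  obtain ⟨t, htS, htu⟩ := exists_lt_of_csInf_lt (kth_set_nonempty s R k hk1 hks) hQlt
  have hQt : Q ≤ t := csInf_le (kth_set_bddBelow s R k hk1 hks) htS
  have hsub : s.filter (fun i => R i ≤ t) ⊆ s.filter (fun i => R i ≤ Q) := by
    intro i hi
    rw [Finset.mem_filter] at *
    refine ⟨hi.1, ?_⟩
    by_contra hgt
    push_neg at hgt
    have hiB : i ∈ B := Finset.mem_filter.mpr ⟨hi.1, hgt⟩
    have : u ≤ R i := Finset.min'_le _ _ (Finset.mem_image_of_mem R hiB)
    linarith [hi.2]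
  have := Finset.card_le_card hsub
  simp only [Set.mem_setOf_eq] at htS
  omega

lemma key_count (m k : ℕ) (hk1 : 1 ≤ k) (x : Fin (m+1) → ℝ) :
    k ≤ m + 1 →
    k ≤ (Finset.univ.filter fun j : Fin (m+1) =>
      (Finset.univ.filter fun i : Fin (m+1) => x i < x j).card < k).card := by
  intro hk
  have hcard : (Finset.univ : Finset (Fin (m+1))).card = m + 1 := by simp
  have hks : k ≤ (Finset.univ : Finset (Fin (m+1))).card := by rw [hcard]; exact hk
  set Q := kthSmallestReal (Finset.univ : Finset (Fin (m+1))) x k with hQ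
  have hmem := kth_mem (Finset.univ : Finset (Fin (m+1))) x k hk1 hks
  have hQcnt : (Finset.univ.filter fun i : Fin (m+1) => x i < Q).card < k :=
    (le_kth_iff Finset.univ x k hk1 hks Q).mp le_rfl
  refine le_trans hmem (Finset.card_le_card ?_)
  intro j hj
  rw [Finset.mem_filter] at *
  refine ⟨Finset.mem_univ j, ?_⟩
  have hjQ : x j ≤ Q := hj.2
  have hsub : (Finset.univ.filter fun i : Fin (m+1) => x i < x j) ⊆
      (Finset.univ.filter fun i : Fin (m+1) => x i < Q) := by
    intro i hi
    rw [Finset.mem_filter] at *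
    exact ⟨hi.1, lt_of_lt_of_le hi.2 hjQ⟩
  exact lt_of_le_of_lt (Finset.card_le_card hsub) hQcnt

lemma cnt_measurable (n : ℕ) (j : Fin n) :
    Measurable fun x : Fin n → ℝ => (Finset.univ.filter fun i => x i < x j).card := by
  classical
  have : (fun x : Fin n → ℝ => (Finset.univ.filter fun i => x i < x j).card)
      = fun x => ∑ i : Fin n, if x i < x j then 1 else 0 := by
    funext x
    rw [Finset.card_filter]
  rw [this]
  apply Finset.measurable_sum
  intro i _
  apply Measurable.ite (measurableSet_lt (measurable_pi_apply i) (measurable_pi_apply j))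
    measurable_const measurable_const


/-- **Exchangeability and order statistics:** if `R_1, …, R_{m+1}` are exchangeable real
random variables and `1 ≤ k ≤ m`, then the probability that `R_{m+1}` is at most the `k`-th
smallest of `R_1, …, R_m` is at least `k / (m+1)`. -/
theorem exchangeable_order_statistic (m k : ℕ) (hk1 : 1 ≤ k) (hkm : k ≤ m)
    (Ω : Type) [MeasurableSpace Ω] (μ : Measure Ω) [IsProbabilityMeasure μ]
    (R : Fin (m + 1) → Ω → ℝ) (hR : ∀ i, Measurable (R i))
    (hexch : ∀ σ : Equiv.Perm (Fin (m + 1)),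
      μ.map (fun ω => fun i => R (σ i) ω) = μ.map (fun ω => fun i => R i ω)) :
    (k : ℝ≥0∞) / ((m : ℝ≥0∞) + 1) ≤
      μ {ω | R (Fin.last m) ω ≤
        kthSmallestReal (Finset.univ : Finset (Fin m)) (fun i => R i.castSucc ω) k} := by
  classical
  set X : Ω → (Fin (m+1) → ℝ) := fun ω i => R i ω with hXdef
  have hXmeas : Measurable X := measurable_pi_lambda _ hR
  set ν := μ.map X with hν
  have hνprob : IsProbabilityMeasure ν := Measure.isProbabilityMeasure_map hXmeas.aemeasurable
  set A : Fin (m+1) → Set (Fin (m+1) → ℝ) :=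
    fun j => {x | (Finset.univ.filter fun i => x i < x j).card < k} with hAdef
  have hAmeas : ∀ j, MeasurableSet (A j) := by
    intro j
    have : A j = (fun x : Fin (m+1) → ℝ =>
        (Finset.univ.filter fun i => x i < x j).card) ⁻¹' {n | n < k} := rfl
    rw [this]
    exact (cnt_measurable (m+1) j) (by trivial)
  -- all events have the same measure
  have hAeq : ∀ j, ν (A j) = ν (A (Fin.last m)) := by
    intro j
    set σ : Equiv.Perm (Fin (m+1)) := Equiv.swap j (Fin.last m) with hσ
    have hcomp : Measurable fun y : Fin (m+1) → ℝ => y ∘ σ :=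
      measurable_pi_lambda _ fun i => measurable_pi_apply _
    have hmap : ν.map (fun y => y ∘ σ) = ν := by
      rw [hν, Measure.map_map hcomp hXmeas]
      exact hexch σ
    have hpre : (fun y : Fin (m+1) → ℝ => y ∘ σ) ⁻¹' (A (Fin.last m)) = A j := by
      ext x
      simp only [Set.mem_preimage, hAdef, Set.mem_setOf_eq, Function.comp]
      have hσlast : σ (Fin.last m) = j := Equiv.swap_apply_right j (Fin.last m)
      have hcnt : (Finset.univ.filter fun i => x (σ i) < x (σ (Fin.last m))).card
          = (Finset.univ.filter fun i => x i < x j).card := by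
        rw [hσlast]
        apply Finset.card_nbij σ
        · intro a ha
          simp only [Finset.coe_filter, Set.mem_setOf_eq] at *
          exact ⟨Finset.mem_univ _, ha.2⟩
        · exact Set.injOn_of_injective σ.injective
        · intro b hb
          simp only [Finset.coe_filter, Set.mem_setOf_eq] at *
          exact ⟨σ.symm b, ⟨Finset.mem_univ _, by simpa using hb.2⟩, by simp⟩
      rw [hcnt]
    calc ν (A j) = ν ((fun y : Fin (m+1) → ℝ => y ∘ σ) ⁻¹' (A (Fin.last m))) := by rw [hpre]
    _ = ν.map (fun y => y ∘ σ) (A (Fin.last m)) :=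
        (Measure.map_apply hcomp (hAmeas (Fin.last m))).symm
    _ = ν (A (Fin.last m)) := by rw [hmap]
  -- ∑ ν (A j) ≥ k
  have hsum : (k : ℝ≥0∞) ≤ ∑ j : Fin (m+1), ν (A j) := by
    have heach : ∀ j : Fin (m+1), ν (A j) = ∫⁻ x, (A j).indicator 1 x ∂ν :=
      fun j => (lintegral_indicator_one (hAmeas j)).symm
    calc (k : ℝ≥0∞) = ∫⁻ _, (k : ℝ≥0∞) ∂ν := by simp
    _ ≤ ∫⁻ x, ∑ j : Fin (m+1), (A j).indicator 1 x ∂ν := by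
        apply lintegral_mono
        intro x
        show (k : ℝ≥0∞) ≤ ∑ j : Fin (m+1), (A j).indicator 1 x
        have hkey := key_count m k hk1 x (by omega)
        have : ∑ j : Fin (m+1), (A j).indicator (1 : (Fin (m+1) → ℝ) → ℝ≥0∞) x
            = ((Finset.univ.filter fun j : Fin (m+1) =>
              (Finset.univ.filter fun i => x i < x j).card < k).card : ℝ≥0∞) := by
          rw [Finset.card_filter, Nat.cast_sum]
          apply Finset.sum_congr rfl
          intro j _
          by_cases hx : x ∈ A j
          · have hx' : (Finset.univ.filter fun i => x i < x j).card < k := hx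
            simp [Set.indicator_of_mem hx, hx']
          · have hx' : ¬ (Finset.univ.filter fun i => x i < x j).card < k := hx
            simp [Set.indicator_of_notMem hx, hx']
        rw [this]
        exact_mod_cast Nat.cast_le.mpr hkey
    _ = ∑ j : Fin (m+1), ν (A j) := by
        rw [lintegral_finset_sum]
        · exact Finset.sum_congr rfl fun j _ => (heach j).symm
        · intro j _
          exact (measurable_const.indicator (hAmeas j))
  have hsum' : (k : ℝ≥0∞) ≤ ((m : ℝ≥0∞) + 1) * ν (A (Fin.last m)) := by
    calc (k : ℝ≥0∞) ≤ ∑ j : Fin (m+1), ν (A j) := hsum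
    _ = ∑ _j : Fin (m+1), ν (A (Fin.last m)) := Finset.sum_congr rfl fun j _ => hAeq j
    _ = ((m : ℝ≥0∞) + 1) * ν (A (Fin.last m)) := by
        rw [Finset.sum_const, Finset.card_univ, Fintype.card_fin, nsmul_eq_mul]
        push_cast
        ring
  -- the target event equals X ⁻¹' A (last)
  have htarget : {ω | R (Fin.last m) ω ≤
      kthSmallestReal (Finset.univ : Finset (Fin m)) (fun i => R i.castSucc ω) k}
      = X ⁻¹' (A (Fin.last m)) := by
    ext ω
    simp only [Set.mem_setOf_eq, Set.mem_preimage, hAdef]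
    have hcard : (Finset.univ.filter fun i : Fin (m+1) => X ω i < X ω (Fin.last m)).card
        = (Finset.univ.filter fun i : Fin m => R i.castSucc ω < R (Fin.last m) ω).card := by
      rw [Finset.card_filter, Finset.card_filter, Fin.sum_univ_castSucc]
      simp [hXdef]
    have hkm' : k ≤ (Finset.univ : Finset (Fin m)).card := by simp [hkm]
    rw [le_kth_iff Finset.univ (fun i : Fin m => R i.castSucc ω) k hk1 hkm'
      (R (Fin.last m) ω), hcard]
  have hmeas_target : ν (A (Fin.last m)) = μ (X ⁻¹' (A (Fin.last m))) :=
    Measure.map_apply hXmeas (hAmeas _)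
  rw [htarget, ← hmeas_target]
  rw [ENNReal.div_le_iff_le_mul (Or.inl (by simp)) (Or.inl (by simp))]
  calc (k : ℝ≥0∞) ≤ ((m : ℝ≥0∞) + 1) * ν (A (Fin.last m)) := hsum'
  _ = ν (A (Fin.last m)) * ((m : ℝ≥0∞) + 1) := mul_comm _ _
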